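/- Let 𝕂 = ℝ((t)) and 𝕃 = ℂ((t)), and let G = Gal(𝕃/𝕂) be the Galois group of the extension 𝕃/𝕂; G = {e, σ} is cyclic of order 2, where σ acts on a Laurent series by applying complex conjugation to each coefficient: σ(Σ αₗ tˡ) = Σ ᾱₗ tˡ. Then the second group cohomology H²(G, 𝕃ˣ) of G with coefficients in the multiplicative group 𝕃ˣ (with the G-action induced by σ) is isomorphic to ℤ/2 × ℤ/2. -/

import Mathlib

set_option synthInstance.maxHeartbeats 1600000
set_option maxHeartbeats 1600000

/-- The coefficientwise inclusion `ℝ((t)) → ℂ((t))`, as a ring homomorphism. -/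
noncomputable def LaurentSeries.ofRealRingHom : LaurentSeries ℝ →+* LaurentSeries ℂ where
  toFun x := x.map (Complex.ofRealHom : ℝ →+* ℂ)
  map_one' := HahnSeries.map_one (Complex.ofRealHom : ℝ →+* ℂ).toMonoidWithZeroHom
  map_mul' _ _ := HahnSeries.map_mul (Complex.ofRealHom : ℝ →ₙ+* ℂ)
  map_zero' := HahnSeries.map_zero ((Complex.ofRealHom : ℝ →+ ℂ).toZeroHom)
  map_add' _ _ := HahnSeries.map_add (Complex.ofRealHom : ℝ →+ ℂ)

/-- `ℂ((t))` as an algebra over `𝕂 = ℝ((t))`, via the coefficientwise inclusion. -/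
noncomputable instance : Algebra (LaurentSeries ℝ) (LaurentSeries ℂ) :=
  LaurentSeries.ofRealRingHom.toAlgebra

namespace H2Aux
open HahnSeries

abbrev K := LaurentSeries ℝ
abbrev L := LaurentSeries ℂ

lemma algebraMap_coeff (x : K) (n : ℤ) : (algebraMap K L x).coeff n = (x.coeff n : ℂ) := rfl

noncomputable def conjL : L ≃+* L where
  toFun x := x.map (starRingEnd ℂ : ℂ →+* ℂ)
  invFun x := x.map (starRingEnd ℂ : ℂ →+* ℂ)
  left_inv x := by ext n; simp
  right_inv x := by ext n; simp
  map_mul' _ _ := HahnSeries.map_mul ((starRingEnd ℂ) : ℂ →ₙ+* ℂ)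
  map_add' _ _ := HahnSeries.map_add ((starRingEnd ℂ) : ℂ →+ ℂ)

lemma conjL_coeff (x : L) (n : ℤ) : (conjL x).coeff n = (starRingEnd ℂ) (x.coeff n) := rfl

noncomputable def σ : L ≃ₐ[K] L :=
  { conjL with
    commutes' := fun x => by ext n; simp [conjL_coeff, algebraMap_coeff] }

lemma σ_coeff (x : L) (n : ℤ) : (σ x).coeff n = (starRingEnd ℂ) (x.coeff n) := rfl

lemma σ_σ (x : L) : σ (σ x) = x := by
  ext n; rw [σ_coeff, σ_coeff]; exact Complex.conj_conj _

noncomputable def jL : L := HahnSeries.C Complex.I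

lemma jL_sq : jL * jL = -1 := by
  rw [jL, ← map_mul, Complex.I_mul_I, map_neg, map_one]

noncomputable def reZero : ZeroHom ℂ ℝ := ⟨Complex.re, Complex.zero_re⟩
noncomputable def imZero : ZeroHom ℂ ℝ := ⟨Complex.im, Complex.zero_im⟩

lemma decomp (x : L) :
    x = algebraMap K L (x.map reZero) + algebraMap K L (x.map imZero) * jL := by
  ext n
  rw [HahnSeries.coeff_add]
  rw [show jL = HahnSeries.single 0 Complex.I from rfl, HahnSeries.coeff_mul_single_zero]
  rw [algebraMap_coeff, algebraMap_coeff]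
  simp [reZero, imZero]

lemma g_j (g : L ≃ₐ[K] L) : g jL = jL ∨ g jL = -jL := by
  have h2 : g jL * g jL = -1 := by rw [← map_mul, jL_sq, map_neg, map_one]
  have h : (g jL - jL) * (g jL + jL) = 0 := by
    have expand : (g jL - jL) * (g jL + jL) = g jL * g jL - jL * jL := by ring
    rw [expand, h2, jL_sq, sub_self]
  rcases mul_eq_zero.mp h with h | h
  · exact Or.inl (sub_eq_zero.mp h)
  · exact Or.inr (eq_neg_of_add_eq_zero_left h)

lemma classify (g : L ≃ₐ[K] L) :
    g = AlgEquiv.refl ∨ ∀ (x : L) (n : ℤ), (g x).coeff n = (starRingEnd ℂ) (x.coeff n) := by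
  have key : ∀ x : L, g x
      = algebraMap K L (x.map reZero) + algebraMap K L (x.map imZero) * g jL := by
    intro x
    conv_lhs => rw [decomp x]
    rw [map_add, map_mul, AlgEquiv.commutes, AlgEquiv.commutes]
  rcases g_j g with h | h
  · left
    ext x
    rw [key, h, ← decomp]; rfl
  · right
    intro x n
    rw [key, h]
    rw [HahnSeries.coeff_add]
    rw [show (-jL : L) = HahnSeries.single 0 (-Complex.I) by
      rw [jL]; exact (map_neg (HahnSeries.single.addMonoidHom (0:ℤ)) Complex.I).symm]
    rw [HahnSeries.coeff_mul_single_zero]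
    rw [algebraMap_coeff, algebraMap_coeff]
    simp [reZero, imZero, Complex.ext_iff]

lemma σ_ne_refl : σ ≠ AlgEquiv.refl := by
  intro h
  have := congrArg (fun g : L ≃ₐ[K] L => (g jL).coeff 0) h
  simp [σ_coeff, jL, HahnSeries.C_apply, Complex.ext_iff] at this
  norm_num at this

lemma classify' (g : L ≃ₐ[K] L) : g = AlgEquiv.refl ∨ g = σ := by
  rcases classify g with h | h
  · exact Or.inl h
  · right; ext x n; rw [h x n, σ_coeff]

/-! ### Group structure -/

abbrev G := L ≃ₐ[K] L

lemma one_def : (1 : G) = AlgEquiv.refl := rfl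

lemma classify'' (g : G) : g = 1 ∨ g = σ := classify' g

lemma σ_ne_one : σ ≠ (1 : G) := σ_ne_refl

lemma σ_mul_σ : σ * σ = (1 : G) := by
  ext x n
  show ((σ * σ) x).coeff n = _
  rw [AlgEquiv.mul_apply, σ_σ]
  rfl

/-! ### Power series square root -/

noncomputable def sqrtCoeff (a : ℕ → ℝ) : ℕ → ℝ
  | 0 => Real.sqrt (a 0)
  | (n+1) => (a (n+1) - ∑ k ∈ (Finset.Ico 1 (n+1)).attach,
        sqrtCoeff a k.1 * sqrtCoeff a (n+1-k.1)) / (2 * sqrtCoeff a 0)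
  decreasing_by
  · have := Finset.mem_Ico.mp k.2; omega
  · have := Finset.mem_Ico.mp k.2; omega
  · omega

lemma powerSeries_sq (p : PowerSeries ℝ) (hp : 0 < PowerSeries.constantCoeff p) :
    ∃ q : PowerSeries ℝ, q * q = p := by
  set a : ℕ → ℝ := fun n => PowerSeries.coeff n p with ha
  set b := sqrtCoeff a with hb
  have ha0 : 0 < a 0 := by
    rw [ha]; simpa [PowerSeries.coeff_zero_eq_constantCoeff] using hp
  have hb0 : b 0 = Real.sqrt (a 0) := by rw [hb, sqrtCoeff]
  have hb0pos : 0 < b 0 := by rw [hb0]; exact Real.sqrt_pos.mpr ha0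
  refine ⟨PowerSeries.mk b, ?_⟩
  ext n
  rw [PowerSeries.coeff_mul]
  simp only [PowerSeries.coeff_mk]
  rw [Finset.Nat.sum_antidiagonal_eq_sum_range_succ_mk]
  cases n with
  | zero =>
    simp only [Finset.range_one, Finset.sum_singleton, Nat.sub_zero]
    rw [hb0, Real.mul_self_sqrt (le_of_lt ha0)]
  | succ n =>
    have hsplit : ∑ k ∈ Finset.range (n+2), b k * b (n+1-k)
        = b 0 * b (n+1) + (∑ k ∈ Finset.Ico 1 (n+1), b k * b (n+1-k)) + b (n+1) * b 0 := by
      rw [Finset.sum_range_succ, Finset.sum_range_succ']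
      have : ∑ k ∈ Finset.Ico 1 (n+1), b k * b (n+1-k)
          = ∑ i ∈ Finset.range n, b (i+1) * b (n+1-(i+1)) := by
        rw [Finset.sum_Ico_eq_sum_range]
        simp [add_comm 1]
      rw [this]
      simp only [Nat.sub_zero, Nat.add_sub_cancel, Nat.sub_self]
      ring
    rw [hsplit]
    have hrec : b (n+1) = (a (n+1) - ∑ k ∈ Finset.Ico 1 (n+1), b k * b (n+1-k)) / (2 * b 0) := by
      conv_lhs => rw [hb]; rw [sqrtCoeff]
      simp only [← hb]
      rw [Finset.sum_attach (Finset.Ico 1 (n+1)) (fun k => b k * b (n+1-k))]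
    rw [hrec]
    field_simp
    ring

lemma laurent_sqrt (f : LaurentSeries ℝ) (hf : f ≠ 0) (d : ℤ) (hd : f.order = 2*d)
    (hpos : 0 < f.leadingCoeff) : ∃ w : LaurentSeries ℝ, w * w = f := by
  have hconst : 0 < PowerSeries.constantCoeff f.powerSeriesPart := by
    have h0 : PowerSeries.coeff 0 f.powerSeriesPart = f.coeff (f.order + 0) :=
      LaurentSeries.powerSeriesPart_coeff f 0
    rw [add_zero] at h0
    rw [← PowerSeries.coeff_zero_eq_constantCoeff, h0, ← HahnSeries.leadingCoeff_eq]
    exact hpos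
  obtain ⟨q, hq⟩ := powerSeries_sq _ hconst
  refine ⟨HahnSeries.single d 1 * HahnSeries.ofPowerSeries ℤ ℝ q, ?_⟩
  have : (HahnSeries.single d 1 * HahnSeries.ofPowerSeries ℤ ℝ q)
      * (HahnSeries.single d 1 * HahnSeries.ofPowerSeries ℤ ℝ q)
      = (HahnSeries.single d 1 * HahnSeries.single d 1)
        * (HahnSeries.ofPowerSeries ℤ ℝ q * HahnSeries.ofPowerSeries ℤ ℝ q) := by ring
  rw [this, HahnSeries.single_mul_single, mul_one, ← map_mul, hq, ← two_mul, ← hd]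
  exact f.single_order_mul_powerSeriesPart

/-! ### units invariants -/

def IsReal (u : Lˣ) : Prop := σ (u : L) = (u : L)

lemma isReal_iff_im (u : Lˣ) : IsReal u ↔ ∀ n : ℤ, ((u:L).coeff n).im = 0 := by
  constructor
  · intro h n
    have := congrArg (fun x : L => x.coeff n) h
    simp only [σ_coeff] at this
    have := Complex.conj_eq_iff_im.mp this
    exact this
  · intro h
    ext n
    rw [σ_coeff]
    exact Complex.conj_eq_iff_im.mpr (h n)

lemma unit_ne_zero (u : Lˣ) : (u : L) ≠ 0 := Units.ne_zero u

noncomputable def φu (u : Lˣ) : ZMod 2 × ZMod 2 :=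
  (((u:L).order : ZMod 2), if 0 < ((u:L).leadingCoeff).re then 0 else 1)

lemma lc_ne_zero (u : Lˣ) : (u:L).leadingCoeff ≠ 0 :=
  HahnSeries.leadingCoeff_ne_zero.mpr (unit_ne_zero u)

lemma order_mul_units (u v : Lˣ) : ((u*v : Lˣ) : L).order = (u:L).order + (v:L).order := by
  rw [Units.val_mul]
  exact HahnSeries.order_mul (unit_ne_zero u) (unit_ne_zero v)

lemma lc_mul_units (u v : Lˣ) :
    ((u*v : Lˣ) : L).leadingCoeff = (u:L).leadingCoeff * (v:L).leadingCoeff := by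
  rw [HahnSeries.leadingCoeff_eq, order_mul_units, Units.val_mul,
    HahnSeries.coeff_mul_order_add_order]

lemma isReal_mul {u v : Lˣ} (hu : IsReal u) (hv : IsReal v) : IsReal (u * v) := by
  unfold IsReal at *
  rw [Units.val_mul, map_mul, hu, hv]

lemma lc_im_eq_zero {u : Lˣ} (hu : IsReal u) : ((u:L).leadingCoeff).im = 0 := by
  rw [HahnSeries.leadingCoeff_eq]
  exact (isReal_iff_im u).mp hu _

lemma φu_mul {u v : Lˣ} (hu : IsReal u) (hv : IsReal v) : φu (u*v) = φu u + φu v := by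
  unfold φu
  rw [Prod.mk_add_mk, Prod.mk.injEq]
  constructor
  · rw [order_mul_units]; push_cast; ring
  · have him_u := lc_im_eq_zero hu
    have him_v := lc_im_eq_zero hv
    have hru : ((u:L).leadingCoeff).re ≠ 0 := by
      intro h; exact lc_ne_zero u (Complex.ext h him_u)
    have hrv : ((v:L).leadingCoeff).re ≠ 0 := by
      intro h; exact lc_ne_zero v (Complex.ext h him_v)
    rw [lc_mul_units, Complex.mul_re, him_u, him_v]
    rcases lt_or_gt_of_ne hru with h1 | h1 <;> rcases lt_or_gt_of_ne hrv with h2 | h2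
    · rw [if_pos (by nlinarith), if_neg (by linarith), if_neg (by linarith)]; decide
    · rw [if_neg (by nlinarith), if_neg (by linarith), if_pos h2]; decide
    · rw [if_neg (by nlinarith), if_pos h1, if_neg (by linarith)]; decide
    · rw [if_pos (by nlinarith), if_pos h1, if_pos h2]; decide

lemma σ_ne_zero {x : L} (hx : x ≠ 0) : σ x ≠ 0 :=
  fun h => hx (by rw [← σ_σ x, h, map_zero])

theorem coeff_order_ne_zero' {R : Type*} [Zero R] {x : HahnSeries ℤ R} (hx : x ≠ 0) :
    x.coeff x.order ≠ 0 := by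
  rw [← HahnSeries.leadingCoeff_eq]; exact HahnSeries.leadingCoeff_ne_zero.mpr hx

lemma order_σ_le (x : L) (hx : x ≠ 0) : (σ x).order ≤ x.order := by
  apply HahnSeries.order_le_of_coeff_ne_zero
  rw [σ_coeff]
  simpa using coeff_order_ne_zero' hx

lemma order_σ (x : L) : (σ x).order = x.order := by
  by_cases hx : x = 0
  · rw [hx, map_zero]
  refine le_antisymm (order_σ_le x hx) ?_
  have := order_σ_le (σ x) (σ_ne_zero hx)
  rwa [σ_σ] at this

lemma lc_σ (x : L) : (σ x).leadingCoeff = (starRingEnd ℂ) x.leadingCoeff := by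
  rw [HahnSeries.leadingCoeff_eq, HahnSeries.leadingCoeff_eq, order_σ, σ_coeff]

lemma norm_isReal (u : Lˣ) : IsReal (u * Units.map (σ : L ≃ₐ[K] L) u) := by
  unfold IsReal
  rw [Units.val_mul, map_mul]
  simp only [Units.coe_map, MonoidHom.coe_coe]
  rw [σ_σ, mul_comm]

lemma val_map_σ (u : Lˣ) : ((Units.map (σ : L ≃ₐ[K] L) u : Lˣ) : L) = σ (u : L) := rfl

lemma φu_norm (u : Lˣ) : φu (u * Units.map (σ : L ≃ₐ[K] L) u) = 0 := by
  unfold φu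
  rw [Prod.mk_eq_zero]
  constructor
  · rw [order_mul_units, val_map_σ, order_σ]
    rw [show (u:L).order + (u:L).order = 2 * (u:L).order by ring]
    rw [ZMod.intCast_zmod_eq_zero_iff_dvd]
    exact Dvd.intro _ rfl
  · rw [lc_mul_units, val_map_σ, lc_σ, Complex.mul_conj]
    rw [if_pos]
    simp only [Complex.ofReal_re]
    exact Complex.normSq_pos.mpr (lc_ne_zero u)

lemma norm_of_φu_eq_zero {u : Lˣ} (hu : IsReal u) (h : φu u = 0) :
    ∃ v : Lˣ, IsReal v ∧ v * Units.map (σ : L ≃ₐ[K] L) v = u := by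
  rw [φu, Prod.mk_eq_zero] at h
  obtain ⟨h1, h2⟩ := h
  have hpos : 0 < ((u:L).leadingCoeff).re := by
    by_contra hneg
    rw [if_neg hneg] at h2
    exact one_ne_zero h2
  obtain ⟨d, hd⟩ := (ZMod.intCast_zmod_eq_zero_iff_dvd _ 2).mp h1
  have him : ∀ n : ℤ, ((u:L).coeff n).im = 0 := (isReal_iff_im u).mp hu
  set ru : K := HahnSeries.map (u:L) reZero with hru
  have hmap : algebraMap K L ru = (u : L) := by
    ext n
    rw [algebraMap_coeff, hru]
    simp [reZero, Complex.ext_iff, him n]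
  have hru_ne : ru ≠ 0 := by
    intro h0
    exact unit_ne_zero u (by rw [← hmap, h0, map_zero])
  have hcoeff_ru : ∀ n : ℤ, ru.coeff n = ((u:L).coeff n).re := fun n => rfl
  have horder : ru.order = ((u:L)).order := by
    refine le_antisymm (HahnSeries.order_le_of_coeff_ne_zero ?_)
      (HahnSeries.order_le_of_coeff_ne_zero ?_)
    · rw [hcoeff_ru]
      intro h0
      exact coeff_order_ne_zero' (unit_ne_zero u) (Complex.ext h0 (him _))
    · intro h0
      apply coeff_order_ne_zero' hru_ne
      rw [hcoeff_ru, h0, Complex.zero_re]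
  have hlc : ru.leadingCoeff = ((u:L).leadingCoeff).re := by
    rw [HahnSeries.leadingCoeff_eq, HahnSeries.leadingCoeff_eq, horder, hcoeff_ru]
  obtain ⟨w, hw⟩ := laurent_sqrt ru hru_ne d (by rw [horder, hd]; norm_num) (by rw [hlc]; exact hpos)
  have hw_ne : w ≠ 0 := by
    intro h0
    rw [h0, mul_zero] at hw
    exact hru_ne hw.symm
  have hv0_ne : algebraMap K L w ≠ 0 := by
    intro h0
    exact hw_ne ((algebraMap K L).injective (by rw [h0, map_zero]))
  refine ⟨Units.mk0 _ hv0_ne, ?_, ?_⟩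
  · show σ ((algebraMap K L w : L)) = _
    ext n
    rw [σ_coeff, algebraMap_coeff]
    exact Complex.conj_ofReal (w.coeff n)
  · apply Units.ext
    rw [Units.val_mul, val_map_σ]
    show (algebraMap K L w) * σ (algebraMap K L w) = (u : L)
    have hreal : σ (algebraMap K L w) = algebraMap K L w := by
      ext n
      rw [σ_coeff, algebraMap_coeff]
      exact Complex.conj_ofReal _
    rw [hreal, ← map_mul, hw, hmap]

/-! ### Cohomology layer -/

open groupCohomology
open scoped Classical

noncomputable abbrev A : Rep ℤ G := Rep.ofAlgebraAutOnUnits K L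

noncomputable def toU (a : A) : Lˣ := Additive.toMul (α := Lˣ) a
noncomputable def ofU (u : Lˣ) : A := Additive.ofMul (α := Lˣ) u
lemma toU_add (a b : A) : toU (a + b) = toU a * toU b := rfl
lemma toU_sub (a b : A) : toU (a - b) = toU a / toU b := rfl
lemma toU_zero : toU (0 : A) = 1 := rfl
lemma ofU_toU (a : A) : ofU (toU a) = a := rfl
lemma toU_ofU (u : Lˣ) : toU (ofU u) = u := rfl
lemma toU_inj {a b : A} (h : toU a = toU b) : a = b := by
  rw [← ofU_toU a, ← ofU_toU b, h]
lemma toU_rho (g : G) (a : A) : toU (A.ρ g a) = Units.map (g : L →* L) (toU a) := rfl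
lemma cocycle_add_apply (f f' : cocycles₂ A) (p : G × G) : (f + f') p = f p + f' p := rfl

noncomputable def mapσ : Lˣ →* Lˣ := Units.map ((σ : G) : L →* L)

lemma mapσ_val (u : Lˣ) : ((mapσ u : Lˣ) : L) = σ (u : L) := rfl

lemma mapσ_of_isReal {u : Lˣ} (hu : IsReal u) : mapσ u = u := Units.ext hu

lemma isReal_of_mapσ {u : Lˣ} (hu : mapσ u = u) : IsReal u := congrArg Units.val hu

lemma norm_isReal'' (u : Lˣ) : IsReal (mapσ u * u) := by
  rw [mul_comm (mapσ u) u]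
  exact norm_isReal u

lemma φu_norm'' (u : Lˣ) : φu (mapσ u * u) = 0 := by
  rw [mul_comm (mapσ u) u]
  exact φu_norm u

noncomputable def F (f : cocycles₂ A) : A := f (σ, σ) - f (σ, 1)

lemma F_fixed (f : cocycles₂ A) : A.ρ σ (F f) = F f := by
  have hc := (mem_cocycles₂_iff (A := A) ⇑f).1 f.2 σ σ σ
  rw [σ_mul_σ] at hc
  have h1 : f (1, σ) = f (1, 1) := cocycles₂_map_one_fst f σ
  have h2 : f (σ, 1) = A.ρ σ (f (1, 1)) := cocycles₂_map_one_snd f σ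
  rw [h1] at hc
  have h3 : A.ρ σ (f (σ, 1)) = f (1, 1) := by
    rw [h2, ← Module.End.mul_apply, ← map_mul, σ_mul_σ, map_one, Module.End.one_apply]
  have h4 : A.ρ σ (f (σ, σ)) = f (1, 1) + f (σ, σ) - f (σ, 1) := by
    rw [eq_sub_iff_add_eq]
    exact hc.symm
  rw [F, map_sub, h3, h4]
  abel

lemma F_isReal (f : cocycles₂ A) : IsReal (toU (F f)) := by
  have := congrArg toU (F_fixed f)
  rw [toU_rho] at this
  exact isReal_of_mapσ this

lemma F_add (f f' : cocycles₂ A) : F (f + f') = F f + F f' := by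
  simp only [F, cocycle_add_apply]
  abel

noncomputable def Φfun (f : cocycles₂ A) : ZMod 2 × ZMod 2 := φu (toU (F f))

lemma Φfun_add (f f' : cocycles₂ A) : Φfun (f + f') = Φfun f + Φfun f' := by
  rw [Φfun, Φfun, Φfun, F_add, toU_add]
  exact φu_mul (F_isReal f) (F_isReal f')

noncomputable def Φ : cocycles₂ A →+ ZMod 2 × ZMod 2 :=
  AddMonoidHom.mk' Φfun Φfun_add

lemma mem_twoCoboundaries_iff (f : cocycles₂ A) :
    ⇑f ∈ coboundaries₂ A ↔ ∃ x : G → A, ∀ g h : G, A.ρ g (x h) - x (g * h) + x g = f (g, h) := by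
  constructor
  · rintro ⟨x, hx⟩
    refine ⟨x, fun g h => ?_⟩
    have := congrFun hx (g, h)
    rw [d₁₂_hom_apply] at this
    exact this
  · rintro ⟨x, hx⟩
    refine ⟨x, funext fun p => ?_⟩
    rw [d₁₂_hom_apply]
    exact hx p.1 p.2

lemma Φ_coboundary (f : cocycles₂ A) (hf : ⇑f ∈ coboundaries₂ A) : Φfun f = 0 := by
  obtain ⟨x, hx⟩ := (mem_twoCoboundaries_iff f).mp hf
  have hF : F f = (A.ρ σ (x σ) + x σ) - (A.ρ σ (x 1) + x 1) := by
    rw [F, ← hx σ σ, ← hx σ 1, σ_mul_σ, mul_one]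
    abel
  have key : toU (F f) * (mapσ (toU (x 1)) * toU (x 1))
      = mapσ (toU (x σ)) * toU (x σ) := by
    have h0 : F f + (A.ρ σ (x 1) + x 1) = A.ρ σ (x σ) + x σ := by rw [hF]; abel
    have h1 := congrArg toU h0
    rw [toU_add, toU_add, toU_add, toU_rho, toU_rho] at h1
    exact h1
  have h1 := φu_mul (F_isReal f) (norm_isReal'' (toU (x 1)))
  rw [key, φu_norm'', φu_norm''] at h1
  have h2 := h1.symm
  rwa [add_eq_zero_iff_eq_neg, neg_zero] at h2

lemma norm_of_φu_eq_zero' {u : Lˣ} (hu : IsReal u) (h : φu u = 0) :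
    ∃ v : Lˣ, IsReal v ∧ v * mapσ v = u := norm_of_φu_eq_zero hu h

lemma Φ_inj (f : cocycles₂ A) (hf : Φfun f = 0) : ⇑f ∈ coboundaries₂ A := by
  obtain ⟨v, hv_real, hv⟩ := norm_of_φu_eq_zero' (F_isReal f) hf
  set x : G → A := fun g => if g = 1 then f (1,1) else ofU v + f (1,1) with hxdef
  refine (mem_twoCoboundaries_iff f).mpr ⟨x, ?_⟩
  have hx1 : x 1 = f (1,1) := by rw [hxdef]; simp
  have hxσ : x σ = ofU v + f (1,1) := by rw [hxdef]; simp [σ_ne_one]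
  have hρ1 : ∀ a : A, A.ρ 1 a = a := fun a => by rw [map_one, Module.End.one_apply]
  have hρσ1 : A.ρ σ (f (1,1)) = f (σ,1) := (cocycles₂_map_one_snd f σ).symm
  intro g h
  rcases classify'' g with rfl | rfl <;> rcases classify'' h with rfl | rfl
  · rw [hρ1, one_mul, hx1, cocycles₂_map_one_fst f 1]
    abel
  · rw [hρ1, one_mul, hxσ, hx1, cocycles₂_map_one_fst f σ]
    abel
  · rw [mul_one, hx1, hρσ1]
    abel
  · rw [σ_mul_σ, hx1, hxσ, map_add, hρσ1]
    have hval : A.ρ σ (ofU v) + ofU v = F f := by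
      apply toU_inj
      rw [toU_add, toU_rho]
      show mapσ (toU (ofU v)) * toU (ofU v) = toU (F f)
      rw [toU_ofU, mul_comm (mapσ v) v, hv]
    have h5 : A.ρ σ (ofU v) + ofU v + f (σ,1) = f (σ,σ) := by
      rw [hval, F]; abel
    rw [← h5]
    abel

noncomputable def stdC (u : Lˣ) (hu : mapσ u = u) : cocycles₂ A :=
  ⟨fun p => if p.1 = 1 ∨ p.2 = 1 then 0 else ofU u, by
    rw [mem_cocycles₂_iff]
    intro g h j
    have hρu : A.ρ σ (ofU u) = ofU u := by
      apply toU_inj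
      rw [toU_rho]
      show mapσ (toU (ofU u)) = toU (ofU u)
      rw [toU_ofU, hu]
    have hρ1 : ∀ a : A, A.ρ 1 a = a := fun a => by rw [map_one, Module.End.one_apply]
    have hσ1 : ¬ ((σ:G) = 1) := σ_ne_one
    rcases classify'' g with rfl | rfl <;> rcases classify'' h with rfl | rfl <;>
      rcases classify'' j with rfl | rfl <;>
      simp only [one_mul, mul_one, σ_mul_σ] <;>
      simp only [if_pos, or_true, true_or, if_true, hσ1, or_self, if_false, or_false,
        false_or, if_neg, not_false_iff, map_zero, hρ1, hρu] <;>
      abel⟩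

lemma Φfun_stdC (u : Lˣ) (hu : mapσ u = u) : Φfun (stdC u hu) = φu u := by
  rw [Φfun, F]
  have hσ1 : ¬ ((σ:G) = 1) := σ_ne_one
  have h1 : (stdC u hu) (σ, σ) = ofU u := by
    show (if (σ:G) = 1 ∨ (σ:G) = 1 then (0 : A) else ofU u) = _
    rw [if_neg (by simp [hσ1])]
  have h2 : (stdC u hu) (σ, 1) = 0 := by
    show (if (σ:G) = 1 ∨ (1:G) = 1 then (0 : A) else ofU u) = _
    rw [if_pos (Or.inr rfl)]
  rw [h1, h2, sub_zero]
  rw [show toU (ofU u) = u from toU_ofU u]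

/-! ### the generators -/

noncomputable def negOne : Lˣ := -1

lemma negOne_val : ((negOne : Lˣ) : L) = HahnSeries.single 0 (-1 : ℂ) := by
  rw [negOne, Units.val_neg, Units.val_one, ← HahnSeries.single_zero_one]
  exact (map_neg (HahnSeries.single.addMonoidHom (0:ℤ)) (1:ℂ)).symm

lemma negOne_map : mapσ negOne = negOne := by
  apply Units.ext
  rw [mapσ_val, negOne_val]
  ext n
  rw [σ_coeff]
  simp [HahnSeries.coeff_single, apply_ite]

lemma φu_negOne : φu negOne = (0, 1) := by
  rw [φu, negOne_val]
  rw [HahnSeries.order_single (by norm_num : (-1:ℂ) ≠ 0)]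
  rw [HahnSeries.leadingCoeff_of_single]
  norm_num

noncomputable def tU : Lˣ :=
  ⟨HahnSeries.single (1:ℤ) (1:ℂ), HahnSeries.single (-1:ℤ) (1:ℂ),
    by rw [HahnSeries.single_mul_single]; norm_num [HahnSeries.single_zero_one],
    by rw [HahnSeries.single_mul_single]; norm_num [HahnSeries.single_zero_one]⟩

lemma tU_val : ((tU : Lˣ) : L) = HahnSeries.single (1:ℤ) (1:ℂ) := rfl

lemma tU_map : mapσ tU = tU := by
  apply Units.ext
  rw [mapσ_val, tU_val]
  ext n
  rw [σ_coeff]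
  simp [HahnSeries.coeff_single, apply_ite]

lemma φu_tU : φu tU = (1, 0) := by
  rw [φu, tU_val]
  rw [HahnSeries.order_single (one_ne_zero)]
  rw [HahnSeries.leadingCoeff_of_single]
  norm_num

/-! ### The final equivalence -/

noncomputable def Φlin : cocycles₂ A →ₗ[ℤ] ZMod 2 × ZMod 2 := Φ.toIntLinearMap

noncomputable def πh : cocycles₂ A →+ H2 A := (H2π A).hom.toAddMonoidHom

lemma coboundaries_le_ker : πh.ker ≤ Φ.ker := by
  intro f hf
  rw [AddMonoidHom.mem_ker] at hf ⊢
  exact Φ_coboundary f ((H2π_eq_zero_iff f).mp hf)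

noncomputable def Φbar : (cocycles₂ A ⧸ πh.ker) →+ ZMod 2 × ZMod 2 :=
  QuotientAddGroup.lift (N := πh.ker) (φ := Φ) coboundaries_le_ker

lemma Φbar_mk (f : cocycles₂ A) : Φbar (QuotientAddGroup.mk f) = Φfun f := rfl

lemma Φbar_inj : Function.Injective Φbar := by
  rw [injective_iff_map_eq_zero]
  intro q hq
  induction q using QuotientAddGroup.induction_on with
  | H f =>
    apply (QuotientAddGroup.eq_zero_iff f).mpr
    rw [AddMonoidHom.mem_ker]
    exact (H2π_eq_zero_iff f).mpr (Φ_inj f hq)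

lemma Φbar_surj : Function.Surjective Φbar := by
  intro z
  have hy1 : Φbar (QuotientAddGroup.mk (stdC tU tU_map)) = ((1 : ZMod 2), (0 : ZMod 2)) := by
    rw [Φbar_mk, Φfun_stdC, φu_tU]
  have hy2 : Φbar (QuotientAddGroup.mk (stdC negOne negOne_map))
      = ((0 : ZMod 2), (1 : ZMod 2)) := by
    rw [Φbar_mk, Φfun_stdC, φu_negOne]
  have hz : z = 0 ∨ z = (1,0) ∨ z = (0,1) ∨ z = ((1,0) : ZMod 2 × ZMod 2) + (0,1) := by
    revert z; decide
  rcases hz with rfl | rfl | rfl | rfl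
  · exact ⟨0, map_zero _⟩
  · exact ⟨_, hy1⟩
  · exact ⟨_, hy2⟩
  · exact ⟨QuotientAddGroup.mk (stdC tU tU_map)
        + QuotientAddGroup.mk (stdC negOne negOne_map), by rw [map_add, hy1, hy2]⟩

noncomputable def finalEquiv : H2 A ≃+ (ZMod 2 × ZMod 2) :=
  (QuotientAddGroup.quotientKerEquivOfSurjective (φ := πh)
    (hφ := (ModuleCat.epi_iff_surjective _).mp inferInstance)).symm.trans
    (AddEquiv.ofBijective Φbar ⟨Φbar_inj, Φbar_surj⟩)

end H2Aux

/-- Let `𝕂 = ℝ((t))`, `𝕃 = ℂ((t))` and `G = Gal(𝕃/𝕂)`; every element of `G`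
is the identity or acts by conjugating each coefficient, and the second group cohomology
`H²(G, 𝕃ˣ)` is isomorphic to `ℤ/2 × ℤ/2`. -/
theorem h2_of_galois_group_of_complex_laurent_series :
    (∀ g : LaurentSeries ℂ ≃ₐ[LaurentSeries ℝ] LaurentSeries ℂ,
      g = AlgEquiv.refl ∨
        ∀ (x : LaurentSeries ℂ) (n : ℤ), (g x).coeff n = (starRingEnd ℂ) (x.coeff n)) ∧
    Nonempty (groupCohomology.H2
      (Rep.ofAlgebraAutOnUnits (LaurentSeries ℝ) (LaurentSeries ℂ)) ≃+ (ZMod 2 × ZMod 2)) :=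
  ⟨H2Aux.classify, ⟨H2Aux.finalEquiv⟩⟩
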